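/- arXiv:2502.13850 — 6 statements merged into one kernel-verified Lean document; each statement's English description precedes it below -/
import Mathlib

section
/- The set P of consistent collections is the convex hull in ℝ^{2^J − 1} of the finite family consisting of the zero collection 0 and the collections p^{1,S} for all nonempty S ⊆ A; in particular, since this family is finite, P equals its closed convex hull. (Paper's Lemma 1.) -/
open Finset

variable {A : Type*} [Fintype A] [DecidableEq A]

/-- The set `P` of consistent collections: `p` belongs to `P` iff there is a probability
distribution `π` on the power set of `A` such that `p S = Σ_{W ⊇ S} π W` for every
nonempty `S ⊆ A`. -/
def memP (p : {S : Finset A // S.Nonempty} → ℝ) : Prop :=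
  ∃ π : Finset A → ℝ, (∀ W, 0 ≤ π W) ∧ (∑ W : Finset A, π W = 1) ∧
    ∀ S : {S : Finset A // S.Nonempty},
      p S = ∑ W ∈ Finset.univ.filter (fun W : Finset A => S.1 ⊆ W), π W

/-- The collection `p^{1,S}`: value `1` on subsets of `S`, value `0` elsewhere. -/
def pOne (S : {S : Finset A // S.Nonempty}) : {T : Finset A // T.Nonempty} → ℝ :=
  fun T => if T.1 ⊆ S.1 then 1 else 0

/-- The vertex associated to a subset `W`: `0` if `W = ∅`, `pOne W` otherwise. -/
noncomputable def vmap (W : Finset A) : {T : Finset A // T.Nonempty} → ℝ :=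
  if h : W.Nonempty then pOne ⟨W, h⟩ else 0

lemma vmap_apply (W : Finset A) (S : {T : Finset A // T.Nonempty}) :
    vmap W S = if S.1 ⊆ W then 1 else 0 := by
  by_cases h : W.Nonempty
  · simp [vmap, h, pOne]
  · rw [Finset.not_nonempty_iff_eq_empty] at h
    subst h
    have : ¬ S.1 ⊆ (∅ : Finset A) := by
      intro hsub
      exact S.2.ne_empty (Finset.subset_empty.mp hsub)
    simp [vmap, this]

lemma range_vmap :
    (insert (0 : {S : Finset A // S.Nonempty} → ℝ) (Set.range pOne)) = Set.range vmap := by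
  ext x
  constructor
  · rintro (rfl | ⟨S, rfl⟩)
    · exact ⟨∅, by simp [vmap]⟩
    · exact ⟨S.1, by simp [vmap, S.2]⟩
  · rintro ⟨W, rfl⟩
    by_cases h : W.Nonempty
    · exact Or.inr ⟨⟨W, h⟩, by simp [vmap, h]⟩
    · left; simp [vmap, h]

/-- Lemma 1: `P` is the convex hull of `0` together with the `p^{1,S}`, and (this family
being finite) `P` also equals the closed convex hull of this family. -/
theorem lemma1 (hJ : 1 ≤ Fintype.card A) :
    {p : {S : Finset A // S.Nonempty} → ℝ | memP p} =
      convexHull ℝ (insert (0 : {S : Finset A // S.Nonempty} → ℝ) (Set.range pOne)) ∧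
    {p : {S : Finset A // S.Nonempty} → ℝ | memP p} =
      closure (convexHull ℝ
        (insert (0 : {S : Finset A // S.Nonempty} → ℝ) (Set.range pOne))) := by
  have hmain : {p : {S : Finset A // S.Nonempty} → ℝ | memP p} =
      convexHull ℝ (insert (0 : {S : Finset A // S.Nonempty} → ℝ) (Set.range pOne)) := by
    rw [range_vmap]
    ext p
    constructor
    · rintro ⟨π, hπ0, hπ1, hp⟩
      have hpc : p = Finset.univ.centerMass π vmap := by
        rw [Finset.centerMass, hπ1, inv_one, one_smul]
        funext S
        rw [hp S, Finset.sum_apply]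
        simp only [Pi.smul_apply, vmap_apply, smul_eq_mul, mul_ite, mul_one, mul_zero]
        rw [Finset.sum_ite, Finset.sum_const_zero, add_zero]
      rw [hpc]
      exact Finset.centerMass_mem_convexHull _ (fun i _ => hπ0 i) (by rw [hπ1]; norm_num)
        (fun i _ => Set.mem_range_self i)
    · intro hmem
      rw [_root_.convexHull_eq] at hmem
      obtain ⟨ι, t, w, z, hw0, hw1, hz, hcm⟩ := hmem
      choose f hf using fun i (hi : i ∈ t) => hz i hi
      classical
      set g : ι → Finset A := fun i => if hi : i ∈ t then f i hi else ∅ with hg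
      refine ⟨fun W => ∑ i ∈ t.filter (fun i => g i = W), w i, ?_, ?_, ?_⟩
      · intro W
        exact Finset.sum_nonneg fun i hi => hw0 i (Finset.mem_filter.mp hi).1
      · rw [Finset.sum_fiberwise t g w, hw1]
      · intro S
        have hpc : p = ∑ i ∈ t, w i • z i := by
          rw [← hcm, Finset.centerMass, hw1, inv_one, one_smul]
        have hL : p S = ∑ i ∈ t, (if S.1 ⊆ g i then w i else 0) := by
          rw [hpc, Finset.sum_apply]
          refine Finset.sum_congr rfl fun i hi => ?_
          have : z i = vmap (g i) := by rw [hg]; simp only [dif_pos hi]; exact (hf i hi).symm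
          simp [this, vmap_apply, mul_ite]
        rw [hL, ← Finset.sum_fiberwise t g (fun i => if S.1 ⊆ g i then w i else 0),
          Finset.sum_filter]
        refine Finset.sum_congr rfl fun W _ => ?_
        by_cases hSW : S.1 ⊆ W
        · rw [if_pos hSW]
          refine Finset.sum_congr rfl fun i hi => ?_
          rw [if_pos ((Finset.mem_filter.mp hi).2 ▸ hSW)]
        · rw [if_neg hSW]
          refine Finset.sum_eq_zero fun i hi => ?_
          rw [if_neg ((Finset.mem_filter.mp hi).2 ▸ hSW)]
  refine ⟨hmain, ?_⟩
  rw [hmain, (Set.Finite.isClosed_convexHull ℝ ?_).closure_eq]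
  exact (Set.finite_range pOne).insert _
end

section
/- The set of extreme points of P is exactly {0} ∪ {p^{1,S} : ∅ ≠ S ⊆ A}. -/
open Finset

variable {A : Type*} [Fintype A] [DecidableEq A]

/-- The vertex associated to an arbitrary subset `W` of `A`. -/
def eW (W : Finset A) : {T : Finset A // T.Nonempty} → ℝ :=
  fun T => if T.1 ⊆ W then 1 else 0

omit [Fintype A] in
lemma eW_empty : eW (∅ : Finset A) = 0 := by
  funext T
  simp [eW, Finset.subset_empty, T.2.ne_empty]

lemma eW_mem_V (W : Finset A) :
    eW W ∈ insert (0 : {S : Finset A // S.Nonempty} → ℝ) (Set.range pOne) := by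
  by_cases h : W.Nonempty
  · exact Set.mem_insert_iff.mpr (Or.inr ⟨⟨W, h⟩, rfl⟩)
  · rw [Finset.not_nonempty_iff_eq_empty] at h
    subst h
    exact Set.mem_insert_iff.mpr (Or.inl eW_empty)

lemma memP_eW (W : Finset A) : memP (eW W) := by
  refine ⟨fun V => if V = W then 1 else 0, fun V => by positivity, by simp, fun S => ?_⟩
  simp [eW, Finset.sum_ite_eq', Finset.mem_filter]

lemma memP_bounds {p : {S : Finset A // S.Nonempty} → ℝ} (hp : memP p)
    (S : {S : Finset A // S.Nonempty}) : 0 ≤ p S ∧ p S ≤ 1 := by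
  obtain ⟨π, hπ0, hπ1, hπ⟩ := hp
  rw [hπ S]
  constructor
  · exact Finset.sum_nonneg fun W _ => hπ0 W
  · calc ∑ W ∈ Finset.univ.filter (fun W : Finset A => S.1 ⊆ W), π W
        ≤ ∑ W : Finset A, π W :=
          Finset.sum_le_sum_of_subset_of_nonneg (Finset.filter_subset _ _)
            (fun W _ _ => hπ0 W)
      _ = 1 := hπ1

lemma convex_P : Convex ℝ {p : {S : Finset A // S.Nonempty} → ℝ | memP p} := by
  rintro p ⟨π, hπ0, hπ1, hπ⟩ q ⟨ρ, hρ0, hρ1, hρ⟩ a b ha hb hab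
  refine ⟨fun W => a * π W + b * ρ W,
    fun W => add_nonneg (mul_nonneg ha (hπ0 W)) (mul_nonneg hb (hρ0 W)), ?_, fun S => ?_⟩
  · rw [Finset.sum_add_distrib, ← Finset.mul_sum, ← Finset.mul_sum, hπ1, hρ1,
      mul_one, mul_one, hab]
  · simp only [Pi.add_apply, Pi.smul_apply, smul_eq_mul, hπ S, hρ S,
      Finset.sum_add_distrib, Finset.mul_sum]

lemma P_eq_hull :
    {p : {S : Finset A // S.Nonempty} → ℝ | memP p} =
      convexHull ℝ (insert (0 : {S : Finset A // S.Nonempty} → ℝ) (Set.range pOne)) := by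
  apply Set.Subset.antisymm
  · rintro p ⟨π, hπ0, hπ1, hπ⟩
    have hp : p = Finset.univ.centerMass π eW := by
      rw [Finset.centerMass, hπ1, inv_one, one_smul]
      funext S
      rw [hπ S]
      rw [Finset.sum_apply]
      simp only [Pi.smul_apply, smul_eq_mul, eW, mul_ite, mul_one, mul_zero]
      rw [Finset.sum_filter]
    rw [hp]
    exact Finset.centerMass_mem_convexHull _ (fun W _ => hπ0 W) (by rw [hπ1]; norm_num)
      (fun W _ => eW_mem_V W)
  · apply convexHull_min _ convex_P
    intro v hv
    rw [Set.mem_insert_iff] at hv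
    obtain rfl | ⟨S, rfl⟩ := hv
    · have h := memP_eW (∅ : Finset A)
      rwa [eW_empty] at h
    · exact memP_eW S.1
  
lemma eW_extreme (W : Finset A) :
    eW W ∈ Set.extremePoints ℝ {p : {S : Finset A // S.Nonempty} → ℝ | memP p} := by
  rw [mem_extremePoints]
  refine ⟨memP_eW W, fun x hx y hy hseg => ?_⟩
  obtain ⟨a, b, ha, hb, hab, heq⟩ := hseg
  have key : ∀ T : {S : Finset A // S.Nonempty}, x T = eW W T ∧ y T = eW W T := by
    intro T
    have hT := congrFun heq T
    simp only [Pi.add_apply, Pi.smul_apply, smul_eq_mul] at hT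
    obtain ⟨hx0, hx1⟩ := memP_bounds hx T
    obtain ⟨hy0, hy1⟩ := memP_bounds hy T
    by_cases h : T.1 ⊆ W
    · simp only [eW, if_pos h] at hT ⊢
      constructor <;> nlinarith
    · simp only [eW, if_neg h] at hT ⊢
      constructor <;> nlinarith
  exact ⟨funext fun T => (key T).1, funext fun T => (key T).2⟩

/-- The set of extreme points of `P` is exactly `{0} ∪ {p^{1,S} : ∅ ≠ S ⊆ A}`. -/
theorem extreme_points_of_P (hJ : 1 ≤ Fintype.card A) :
    Set.extremePoints ℝ {p : {S : Finset A // S.Nonempty} → ℝ | memP p} =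
      insert (0 : {S : Finset A // S.Nonempty} → ℝ) (Set.range pOne) := by
  apply Set.Subset.antisymm
  · rw [P_eq_hull]
    exact extremePoints_convexHull_subset
  · intro v hv
    rw [Set.mem_insert_iff] at hv
    obtain rfl | ⟨S, rfl⟩ := hv
    · have h := eW_extreme (∅ : Finset A)
      rwa [eW_empty] at h
    · exact eW_extreme S.1
end

section
/- A collection p ∈ P takes values only in {0,1} if and only if p = 0 or p = p^{1,S} for some nonempty S ⊆ A. -/
open Finset

variable {A : Type*} [Fintype A] [DecidableEq A]

/-- A collection `p ∈ P` is `{0,1}`-valued iff `p = 0` or `p = p^{1,S}` for some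
nonempty `S ⊆ A`. -/
theorem zero_one_valued_iff (hJ : 1 ≤ Fintype.card A)
    (p : {S : Finset A // S.Nonempty} → ℝ) (hp : memP p) :
    (∀ S, p S = 0 ∨ p S = 1) ↔
      (p = 0 ∨ ∃ S : {S : Finset A // S.Nonempty}, p = pOne S) := by
  constructor
  · intro h01
    obtain ⟨π, hπ0, hπ1, hpeq⟩ := hp
    set q : Finset A → ℝ := fun S => ∑ W ∈ Finset.univ.filter (fun W : Finset A => S ⊆ W), π W
      with hqdef
    have hpq : ∀ T : {S : Finset A // S.Nonempty}, p T = q T.1 := fun T => hpeq T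
    have hq0 : ∀ S, 0 ≤ q S := fun S => Finset.sum_nonneg fun W _ => hπ0 W
    have hq1 : ∀ S, q S ≤ 1 := by
      intro S
      calc q S ≤ ∑ W : Finset A, π W :=
            Finset.sum_le_sum_of_subset_of_nonneg (Finset.filter_subset _ _)
              (fun W _ _ => hπ0 W)
        _ = 1 := hπ1
    have hmono : ∀ S T : Finset A, S ⊆ T → q T ≤ q S := by
      intro S T hST
      apply Finset.sum_le_sum_of_subset_of_nonneg
      · intro W hW
        simp only [Finset.mem_filter, Finset.mem_univ, true_and] at hW ⊢
        exact hST.trans hW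
      · exact fun W _ _ => hπ0 W
    have hsup : ∀ S T : Finset A, q S + q T - 1 ≤ q (S ∪ T) := by
      intro S T
      have hkey : q S + q T =
          (∑ W ∈ (Finset.univ.filter (fun W : Finset A => S ⊆ W) ∪
            Finset.univ.filter (fun W : Finset A => T ⊆ W)), π W) + q (S ∪ T) := by
        rw [hqdef]
        rw [← Finset.sum_union_inter]
        congr 2
        ext W
        simp [Finset.union_subset_iff, and_comm]
      have hle : (∑ W ∈ (Finset.univ.filter (fun W : Finset A => S ⊆ W) ∪
            Finset.univ.filter (fun W : Finset A => T ⊆ W)), π W) ≤ 1 := by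
        calc _ ≤ ∑ W : Finset A, π W :=
              Finset.sum_le_sum_of_subset_of_nonneg (Finset.subset_univ _)
                (fun W _ _ => hπ0 W)
          _ = 1 := hπ1
      linarith
    have h01q : ∀ S : Finset A, S.Nonempty → q S = 0 ∨ q S = 1 := by
      intro S hS
      have := h01 ⟨S, hS⟩
      rwa [hpq ⟨S, hS⟩] at this
    -- induction lemma: if all singletons of S have q = 1, then q S = 1
    have hind : ∀ S : Finset A, (∀ a ∈ S, q {a} = 1) → q S = 1 := by
      intro S
      induction S using Finset.induction_on with
      | empty =>
        intro _
        have : Finset.univ.filter (fun W : Finset A => ∅ ⊆ W) = Finset.univ := by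
          simp
        rw [hqdef]
        simpa [this] using hπ1
      | @insert a S ha ih =>
        intro h
        have h1 : q {a} = 1 := h a (Finset.mem_insert_self a S)
        have h2 : q S = 1 := ih fun b hb => h b (Finset.mem_insert_of_mem hb)
        have h3 := hsup {a} S
        rw [h1, h2] at h3
        have h4 : ({a} : Finset A) ∪ S = insert a S := by
          rw [Finset.insert_eq]
        rw [h4] at h3
        have := hq1 (insert a S)
        linarith
    -- the candidate set
    by_cases hS : (Finset.univ.filter (fun a : A => q {a} = 1)).Nonempty
    · right
      refine ⟨⟨_, hS⟩, ?_⟩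
      funext T
      rw [hpq T, pOne]
      set S := Finset.univ.filter (fun a : A => q {a} = 1) with hSdef
      by_cases hTS : T.1 ⊆ S
      · simp only [hTS, if_true]
        have hqS : q S = 1 := by
          apply hind
          intro a haS
          rw [hSdef] at haS
          simp only [Finset.mem_filter] at haS
          exact haS.2
        have := hmono T.1 S hTS
        rw [hqS] at this
        have := hq1 T.1
        split_ifs with hc
        · linarith [hmono T.1 S hTS, hqS ▸ hmono T.1 S hTS]
        · exact absurd hTS hc
      · simp only [hTS, if_false]
        obtain ⟨a, haT, haS⟩ := Finset.not_subset.mp hTS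
        have ha0 : q {a} = 0 := by
          rcases h01q {a} (Finset.singleton_nonempty a) with h | h
          · exact h
          · exact absurd (by simp [hSdef, h]) haS
        have : q T.1 ≤ q {a} := hmono {a} T.1 (Finset.singleton_subset_iff.mpr haT)
        rw [ha0] at this
        have := hq0 T.1
        split_ifs with hc
        · exact absurd hc hTS
        · linarith [hq0 T.1, ha0 ▸ hmono {a} T.1 (Finset.singleton_subset_iff.mpr haT)]
    · left
      funext T
      obtain ⟨a, haT⟩ := T.2
      have ha0 : q {a} = 0 := by
        rcases h01q {a} (Finset.singleton_nonempty a) with h | h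
        · exact h
        · exact absurd ⟨a, by simp [h]⟩ hS
      have h1 : q T.1 ≤ q {a} := hmono {a} T.1 (Finset.singleton_subset_iff.mpr haT)
      have h2 := hq0 T.1
      have : p T = q T.1 := hpq T
      simp only [Pi.zero_apply]
      linarith [ha0 ▸ h1]
  · rintro (rfl | ⟨S, rfl⟩) T
    · left; rfl
    · rw [pOne]
      by_cases h : T.1 ⊆ S.1 <;> simp [h]
end

section
/- For every p ∈ P with p ≠ 0, there exists a unique family (α_T)_{∅ ≠ T ⊆ A} of nonnegative real numbers with Σ_{∅ ≠ T ⊆ A} α_T ≤ 1 such that p = Σ_{∅ ≠ T ⊆ A} α_T · p^{1,T}. -/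
open Finset

variable {A : Type*} [Fintype A] [DecidableEq A]

lemma eval_sum (α : {S : Finset A // S.Nonempty} → ℝ) (S : {S : Finset A // S.Nonempty}) :
    (∑ T : {S : Finset A // S.Nonempty}, α T • pOne T) S
      = ∑ T : {S : Finset A // S.Nonempty}, if S.1 ⊆ T.1 then α T else 0 := by
  rw [Finset.sum_apply]
  refine Finset.sum_congr rfl fun T _ => ?_
  simp [pOne, mul_ite, mul_one, mul_zero]

lemma inj_aux (α β : {S : Finset A // S.Nonempty} → ℝ)
    (h : ∀ S : {S : Finset A // S.Nonempty},
      (∑ T : {S : Finset A // S.Nonempty}, if S.1 ⊆ T.1 then α T else 0)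
        = ∑ T : {S : Finset A // S.Nonempty}, if S.1 ⊆ T.1 then β T else 0) :
    α = β := by
  set γ : {S : Finset A // S.Nonempty} → ℝ := fun T => α T - β T with hγdef
  have hγ : ∀ S : {S : Finset A // S.Nonempty},
      (∑ T : {S : Finset A // S.Nonempty}, if S.1 ⊆ T.1 then γ T else 0) = 0 := by
    intro S
    have heq : (∑ T : {S : Finset A // S.Nonempty}, if S.1 ⊆ T.1 then γ T else 0)
        = (∑ T : {S : Finset A // S.Nonempty}, if S.1 ⊆ T.1 then α T else 0)
          - ∑ T : {S : Finset A // S.Nonempty}, if S.1 ⊆ T.1 then β T else 0 := by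
      rw [← Finset.sum_sub_distrib]
      refine Finset.sum_congr rfl fun T _ => ?_
      by_cases hST : S.1 ⊆ T.1 <;> simp [hST, hγdef]
    rw [heq, h S, sub_self]
  have key : ∀ n : ℕ, ∀ S : {S : Finset A // S.Nonempty},
      Fintype.card A - S.1.card = n → γ S = 0 := by
    intro n
    induction n using Nat.strong_induction_on with
    | _ n ih =>
      intro S hS
      have h0 := hγ S
      rw [← Finset.add_sum_erase Finset.univ _ (Finset.mem_univ S)] at h0
      rw [if_pos (Finset.Subset.refl S.1)] at h0
      have hrest : (∑ T ∈ Finset.univ.erase S,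
          if S.1 ⊆ T.1 then γ T else 0) = 0 := by
        refine Finset.sum_eq_zero fun T hT => ?_
        by_cases hST : S.1 ⊆ T.1
        · rw [if_pos hST]
          have hne' : T ≠ S := (Finset.mem_erase.mp hT).1
          have hlt : S.1.card < T.1.card := by
            refine Finset.card_lt_card ?_
            exact lt_of_le_of_ne hST (fun hEq => hne' (Subtype.ext hEq.symm))
          have hTle : T.1.card ≤ Fintype.card A := Finset.card_le_univ T.1
          exact ih (Fintype.card A - T.1.card) (by omega) T rfl
        · exact if_neg hST
      rw [hrest, add_zero] at h0
      exact h0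
  have hall : ∀ S, γ S = 0 := fun S => key _ S rfl
  funext S
  have := hall S
  simp only [hγdef] at this
  linarith

/-- For every `p ∈ P` with `p ≠ 0`, there is a unique family `(α_T)_{∅ ≠ T ⊆ A}` of
nonnegative reals summing to at most `1` with `p = Σ_T α_T • p^{1,T}`. -/
theorem unique_decomposition (hJ : 1 ≤ Fintype.card A)
    (p : {S : Finset A // S.Nonempty} → ℝ) (hp : memP p) (hne : p ≠ 0) :
    ∃! α : {S : Finset A // S.Nonempty} → ℝ,
      (∀ T, 0 ≤ α T) ∧ (∑ T : {S : Finset A // S.Nonempty}, α T) ≤ 1 ∧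
        p = ∑ T : {S : Finset A // S.Nonempty}, α T • pOne T := by
  obtain ⟨π, hπ0, hπ1, hπp⟩ := hp
  -- rewrite p S as a sum over the subtype
  have hfilt : ∀ S : {S : Finset A // S.Nonempty},
      (∑ W ∈ Finset.univ.filter (fun W : Finset A => S.1 ⊆ W), π W)
        = ∑ T : {S : Finset A // S.Nonempty}, if S.1 ⊆ T.1 then π T.1 else 0 := by
    intro S
    rw [Finset.sum_filter]
    rw [← Finset.sum_subtype (Finset.univ.filter Finset.Nonempty)
      (fun W => by simp) (fun W => if S.1 ⊆ W then π W else 0)]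
    symm
    refine Finset.sum_subset (Finset.filter_subset _ _) fun W _ hW => ?_
    rw [Finset.mem_filter] at hW
    have hWe : ¬ W.Nonempty := fun h => hW ⟨Finset.mem_univ W, h⟩
    rw [if_neg]
    intro hSW
    exact hWe (S.2.mono hSW)
  refine ⟨fun T => π T.1, ⟨fun T => hπ0 T.1, ?_, ?_⟩, ?_⟩
  · -- sum ≤ 1
    calc (∑ T : {S : Finset A // S.Nonempty}, π T.1)
        = ∑ W ∈ Finset.univ.filter Finset.Nonempty, π W := by
          rw [← Finset.sum_subtype (Finset.univ.filter Finset.Nonempty)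
            (fun W => by simp) π]
      _ ≤ ∑ W : Finset A, π W := by
          refine Finset.sum_le_sum_of_subset_of_nonneg (Finset.filter_subset _ _)
            fun W _ _ => hπ0 W
      _ = 1 := hπ1
  · funext S
    rw [eval_sum, hπp S, hfilt S]
  · rintro β ⟨_, _, hβ⟩
    refine inj_aux β (fun T => π T.1) fun S => ?_
    have h1 : p S = ∑ T : {S : Finset A // S.Nonempty},
        if S.1 ⊆ T.1 then β T else 0 := by
      rw [hβ, eval_sum]
    rw [← h1, hπp S, hfilt S]
end

section
/- (Theorem 1.) Let m : U × P → [0,∞) be a performance measure such that for every p ∈ P the map u ↦ m(u,p) is continuous on U. Then m satisfies 'same contribution—same impact' and 'expected valuation for single-axiom-reducible problems' if and only if m is the weighted Möbius performance measure, i.e. m(u,p) = Σ_{∅ ≠ S ⊆ A} u_S · Σ_{T : S ⊆ T ⊆ A} (−1)^{|T ∖ S|} p_T for all (u,p) ∈ U × P. -/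
set_option linter.unusedSectionVars false
open Finset

variable {A : Type*} [Fintype A] [DecidableEq A]

private lemma alt_sum_powerset (x : Finset A) :
    (∑ m ∈ x.powerset, (-1 : ℝ) ^ m.card) = if x = ∅ then 1 else 0 := by
  have h := Finset.sum_powerset_neg_one_pow_card (x := x)
  have : ((∑ m ∈ x.powerset, (-1 : ℤ) ^ m.card : ℤ) : ℝ)
      = ∑ m ∈ x.powerset, (-1 : ℝ) ^ m.card := by push_cast; rfl
  rw [← this, h]
  split <;> simp

private lemma alt_sum_Icc {S W : Finset A} (h : S ⊆ W) :
    (∑ T ∈ Finset.Icc S W, (-1 : ℝ) ^ (T \ S).card) = if S = W then 1 else 0 := by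
  have key : (∑ T ∈ Finset.Icc S W, (-1 : ℝ) ^ (T \ S).card)
      = ∑ V ∈ (W \ S).powerset, (-1 : ℝ) ^ V.card := by
    refine Finset.sum_bij' (fun T _ => T \ S) (fun V _ => V ∪ S) ?_ ?_ ?_ ?_ ?_
    · intro T hT
      rw [Finset.mem_Icc] at hT
      rw [Finset.mem_powerset]
      exact Finset.sdiff_subset_sdiff hT.2 (le_refl S)
    · intro V hV
      rw [Finset.mem_powerset] at hV
      rw [Finset.mem_Icc]
      exact ⟨Finset.subset_union_right, Finset.union_subset (hV.trans (Finset.sdiff_subset)) h⟩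
    · intro T hT
      rw [Finset.mem_Icc] at hT
      exact Finset.sdiff_union_of_subset hT.1
    · intro V hV
      rw [Finset.mem_powerset] at hV
      have hd : Disjoint V S := Finset.disjoint_of_subset_left hV Finset.sdiff_disjoint
      show (V ∪ S) \ S = V
      rw [Finset.union_sdiff_right, Finset.sdiff_eq_self_of_disjoint hd]
    · intro T hT; rfl
  rw [key, alt_sum_powerset]
  have h2 : (W \ S = ∅) ↔ (S = W) := by
    rw [Finset.sdiff_eq_empty_iff_subset]
    exact ⟨fun h' => Finset.Subset.antisymm h h', fun h' => h' ▸ Finset.Subset.refl _⟩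
  by_cases hc : S = W
  · rw [if_pos hc, if_pos (h2.mpr hc)]
  · rw [if_neg hc, if_neg (fun hx => hc (h2.mp hx))]

/-- The contribution `α^p_S = Σ_{T ⊇ S} (−1)^{|T ∖ S|} p_T` of `S` under `p`. -/
def contrib (p : {S : Finset A // S.Nonempty} → ℝ) (S : {S : Finset A // S.Nonempty}) : ℝ :=
  ∑ T ∈ Finset.univ.filter
      (fun T : {T : Finset A // T.Nonempty} => S.1 ⊆ T.1),
    (-1 : ℝ) ^ (T.1 \ S.1).card * p T

/-- `u` is a capacity: nonnegative and monotone with respect to inclusion. -/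
def IsCapacity (u : {S : Finset A // S.Nonempty} → ℝ) : Prop :=
  (∀ S, 0 ≤ u S) ∧
    ∀ T S : {S : Finset A // S.Nonempty}, T.1 ⊆ S.1 → u T ≤ u S

private def pext (p : {S : Finset A // S.Nonempty} → ℝ) (T : Finset A) : ℝ :=
  if h : T.Nonempty then p ⟨T, h⟩ else 0

private lemma contrib_eq_finset (p : {S : Finset A // S.Nonempty} → ℝ)
    (S : {S : Finset A // S.Nonempty}) :
    contrib p S = ∑ T ∈ Finset.univ.filter (fun T : Finset A => S.1 ⊆ T),
      (-1 : ℝ) ^ (T \ S.1).card * pext p T := by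
  unfold contrib
  refine Finset.sum_bij' (fun T _ => T.1)
      (fun T hT => (⟨T, S.2.mono (Finset.mem_filter.mp hT).2⟩ : {T : Finset A // T.Nonempty}))
      ?_ ?_ ?_ ?_ ?_
  · intro T hT
    simp only [Finset.mem_filter, Finset.mem_univ, true_and] at hT ⊢
    exact hT
  · intro T hT
    simp only [Finset.mem_filter, Finset.mem_univ, true_and] at hT ⊢
    exact hT
  · intro T hT; rfl
  · intro T hT; rfl
  · intro T hT
    simp only [pext]
    rw [dif_pos T.2]

private lemma contrib_smul_pOne (l : ℝ) (S T : {S : Finset A // S.Nonempty}) :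
    contrib (l • pOne S) T = if T = S then l else 0 := by
  rw [contrib_eq_finset]
  have hpt : ∀ T' ∈ Finset.univ.filter (fun T' : Finset A => T.1 ⊆ T'),
      (-1 : ℝ) ^ (T' \ T.1).card * pext (l • pOne S) T'
        = if T' ⊆ S.1 then (-1 : ℝ) ^ (T' \ T.1).card * l else 0 := by
    intro T' hT'
    simp only [Finset.mem_filter, Finset.mem_univ, true_and] at hT'
    have hne : T'.Nonempty := T.2.mono hT'
    have : pext (l • pOne S) T' = l * (if T' ⊆ S.1 then (1:ℝ) else 0) := by
      simp [pext, dif_pos hne, pOne]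
    rw [this]
    by_cases h : T' ⊆ S.1
    · rw [if_pos h, if_pos h]; ring
    · rw [if_neg h, if_neg h]; ring
  rw [Finset.sum_congr rfl hpt, ← Finset.sum_filter, Finset.filter_filter]
  have hIcc : Finset.univ.filter (fun T' : Finset A => T.1 ⊆ T' ∧ T' ⊆ S.1)
      = Finset.Icc T.1 S.1 := by
    ext X; simp [Finset.mem_Icc]
  rw [hIcc, ← Finset.sum_mul]
  by_cases hTS : T.1 ⊆ S.1
  · rw [alt_sum_Icc hTS]
    by_cases he : T = S
    · rw [if_pos he, if_pos (congrArg Subtype.val he), one_mul]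
    · rw [if_neg he, if_neg (fun hx => he (Subtype.ext hx)), zero_mul]
  · rw [Finset.Icc_eq_empty (fun hx => hTS hx), Finset.sum_empty, zero_mul,
      if_neg (fun he => hTS (by rw [he]))]

private lemma contrib_of_memP {p : {S : Finset A // S.Nonempty} → ℝ} (π : Finset A → ℝ)
    (hrep : ∀ S : {S : Finset A // S.Nonempty},
      p S = ∑ W ∈ Finset.univ.filter (fun W : Finset A => S.1 ⊆ W), π W)
    (S : {S : Finset A // S.Nonempty}) :
    contrib p S = π S.1 := by
  rw [contrib_eq_finset]
  have hpt : ∀ T ∈ Finset.univ.filter (fun T : Finset A => S.1 ⊆ T),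
      (-1 : ℝ) ^ (T \ S.1).card * pext p T
        = ∑ W : Finset A, (if T ⊆ W then (-1 : ℝ) ^ (T \ S.1).card * π W else 0) := by
    intro T hT
    simp only [Finset.mem_filter, Finset.mem_univ, true_and] at hT
    have hne : T.Nonempty := S.2.mono hT
    rw [show pext p T = ∑ W ∈ Finset.univ.filter (fun W : Finset A => T ⊆ W), π W from by
      simp only [pext, dif_pos hne]; exact hrep ⟨T, hne⟩]
    rw [Finset.mul_sum, Finset.sum_filter]
  rw [Finset.sum_congr rfl hpt, Finset.sum_comm]
  have hinner : ∀ W : Finset A,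
      (∑ T ∈ Finset.univ.filter (fun T : Finset A => S.1 ⊆ T),
        (if T ⊆ W then (-1 : ℝ) ^ (T \ S.1).card * π W else 0))
      = if W = S.1 then π W else 0 := by
    intro W
    rw [← Finset.sum_filter, Finset.filter_filter]
    have hIcc : Finset.univ.filter (fun T : Finset A => S.1 ⊆ T ∧ T ⊆ W)
        = Finset.Icc S.1 W := by
      ext X; simp [Finset.mem_Icc]
    rw [hIcc, ← Finset.sum_mul]
    by_cases hSW : S.1 ⊆ W
    · rw [alt_sum_Icc hSW]
      by_cases he : S.1 = W
      · rw [if_pos he, if_pos he.symm, one_mul]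
      · rw [if_neg he, if_neg (fun hx => he hx.symm), zero_mul]
    · rw [Finset.Icc_eq_empty (fun hx => hSW hx), Finset.sum_empty, zero_mul,
        if_neg (fun he => hSW (by rw [he]))]
  rw [Finset.sum_congr rfl (fun W _ => hinner W), Finset.sum_ite_eq' Finset.univ S.1 π]
  simp

private lemma contrib_mem_unit {p : {S : Finset A // S.Nonempty} → ℝ} (hp : memP p)
    (S : {S : Finset A // S.Nonempty}) : 0 ≤ contrib p S ∧ contrib p S ≤ 1 := by
  obtain ⟨π, hpos, hsum, hrep⟩ := hp
  rw [contrib_of_memP π hrep]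
  exact ⟨hpos _, by
    rw [← hsum]
    exact Finset.single_le_sum (fun W _ => hpos W) (Finset.mem_univ _)⟩

private lemma memP_smul_pOne {l : ℝ} (h0 : 0 ≤ l) (h1 : l ≤ 1)
    (S : {S : Finset A // S.Nonempty}) : memP (l • pOne S) := by
  refine ⟨fun W => (if W = S.1 then l else 0) + (if W = ∅ then 1 - l else 0), ?_, ?_, ?_⟩
  · intro W
    show (0:ℝ) ≤ (if W = S.1 then l else 0) + (if W = ∅ then 1 - l else 0)
    have : (0:ℝ) ≤ (if W = S.1 then l else 0) := by split <;> simp [h0]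
    have h2 : (0:ℝ) ≤ (if W = ∅ then 1 - l else 0) := by split <;> simp [h1]
    linarith
  · rw [Finset.sum_add_distrib, Finset.sum_ite_eq' Finset.univ S.1 (fun _ => l),
      Finset.sum_ite_eq' Finset.univ ∅ (fun _ => 1 - l)]
    simp
  · intro T
    rw [Finset.sum_add_distrib, Finset.sum_ite_eq' _ S.1 (fun _ => l),
      Finset.sum_ite_eq' _ (∅ : Finset A) (fun _ => 1 - l)]
    have hem : ¬ ((∅ : Finset A) ∈ Finset.univ.filter (fun W : Finset A => T.1 ⊆ W)) := by
      simp [Finset.subset_empty, T.2.ne_empty]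
    rw [if_neg hem, add_zero]
    simp only [Finset.mem_filter, Finset.mem_univ, true_and, Pi.smul_apply, pOne,
      smul_eq_mul, mul_ite, mul_one, mul_zero]

/-- `m` satisfies *expected valuation for single-axiom-reducible problems*:
`m (u, λ • p^{1,S}) = λ * u S`. -/
def ExpectedValuation
    (m : ({S : Finset A // S.Nonempty} → ℝ) → ({S : Finset A // S.Nonempty} → ℝ) → ℝ) :
    Prop :=
  ∀ l : ℝ, 0 ≤ l → l ≤ 1 → ∀ S : {S : Finset A // S.Nonempty},
    ∀ u, IsCapacity u → m u (l • pOne S) = l * u S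

/-- `m` satisfies *same contribution—same impact*. -/
def SameContribSameImpact
    (m : ({S : Finset A // S.Nonempty} → ℝ) → ({S : Finset A // S.Nonempty} → ℝ) → ℝ) :
    Prop :=
  ∀ p p', memP p → memP p' → ∀ S : {S : Finset A // S.Nonempty},
    contrib p S = contrib p' S →
      ∀ u u', IsCapacity u → IsCapacity u' → (∀ T, T ≠ S → u' T = u T) →
        m u' p - m u p = m u' p' - m u p'

private lemma capacity_restrict {u : {S : Finset A // S.Nonempty} → ℝ} (hu : IsCapacity u)
    (D : Finset {S : Finset A // S.Nonempty})
    (hup : ∀ T ∈ D, ∀ T' : {S : Finset A // S.Nonempty}, T.1 ⊆ T'.1 → T' ∈ D) :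
    IsCapacity (fun T => if T ∈ D then u T else 0) := by
  constructor
  · intro T
    dsimp only
    split
    · exact hu.1 T
    · exact le_refl 0
  · intro T S hTS
    dsimp only
    by_cases hT : T ∈ D
    · rw [if_pos hT, if_pos (hup T hT S hTS)]
      exact hu.2 T S hTS
    · rw [if_neg hT]
      split
      · exact hu.1 S
      · exact le_refl 0

private lemma forward_main
    (m : ({S : Finset A // S.Nonempty} → ℝ) → ({S : Finset A // S.Nonempty} → ℝ) → ℝ)
    (hzero : ∀ p, memP p → m 0 p = 0)
    (hSC : SameContribSameImpact m) (hEV : ExpectedValuation m)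
    (u : {S : Finset A // S.Nonempty} → ℝ) (hu : IsCapacity u)
    (p : {S : Finset A // S.Nonempty} → ℝ) (hp : memP p) :
    m u p = ∑ S : {S : Finset A // S.Nonempty}, u S * contrib p S := by
  have key : ∀ D : Finset {S : Finset A // S.Nonempty},
      (∀ T ∈ D, ∀ T' : {S : Finset A // S.Nonempty}, T.1 ⊆ T'.1 → T' ∈ D) →
      m (fun T => if T ∈ D then u T else 0) p = ∑ S ∈ D, u S * contrib p S := by
    intro D
    induction D using Finset.strongInduction with
    | _ D ih =>
      intro hup
      rcases D.eq_empty_or_nonempty with rfl | hne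
      · have : (fun T : {S : Finset A // S.Nonempty} =>
            if T ∈ (∅ : Finset {S : Finset A // S.Nonempty}) then u T else 0) = 0 := by
          funext T; simp
        rw [this, hzero p hp, Finset.sum_empty]
      · obtain ⟨S, hSD, hmin⟩ := D.exists_min_image (fun T => T.1.card) hne
        set D' := D.erase S with hD'
        have hD'up : ∀ T ∈ D', ∀ T' : {S : Finset A // S.Nonempty}, T.1 ⊆ T'.1 → T' ∈ D' := by
          intro T hT T' hTT'
          rw [hD', Finset.mem_erase] at hT ⊢
          refine ⟨?_, hup T hT.2 T' hTT'⟩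
          intro hT'S
          apply hT.1
          apply Subtype.ext
          apply Finset.eq_of_subset_of_card_le
          · rw [← hT'S]; exact hTT'
          · exact (hT'S ▸ hmin T hT.2 : S.1.card ≤ T.1.card)
        set α := contrib p S with hα
        have hαu := contrib_mem_unit hp S
        have hp' : memP (α • pOne S) := memP_smul_pOne hαu.1 hαu.2 S
        have hcsame : contrib p S = contrib (α • pOne S) S := by
          rw [contrib_smul_pOne]; simp [hα]
        have hcapD := capacity_restrict hu D hup
        have hcapD' := capacity_restrict hu D' hD'up
        have hagree : ∀ T, T ≠ S →
            (if T ∈ D then u T else 0) = (if T ∈ D' then u T else 0) := by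
          intro T hT
          by_cases h : T ∈ D
          · rw [if_pos h, if_pos (Finset.mem_erase.mpr ⟨hT, h⟩)]
          · rw [if_neg h, if_neg (fun hx => h (Finset.mem_erase.mp hx).2)]
        have step := hSC p (α • pOne S) hp hp' S hcsame
            (fun T => if T ∈ D' then u T else 0) (fun T => if T ∈ D then u T else 0)
            hcapD' hcapD (fun T hT => hagree T hT)
        have e1 : m (fun T => if T ∈ D then u T else 0) (α • pOne S) = α * u S := by
          rw [hEV α hαu.1 hαu.2 S _ hcapD, if_pos hSD]
        have e2 : m (fun T => if T ∈ D' then u T else 0) (α • pOne S) = 0 := by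
          rw [hEV α hαu.1 hαu.2 S _ hcapD',
            if_neg (fun hx => (Finset.mem_erase.mp hx).1 rfl), mul_zero]
        have ihD' := ih D' (Finset.erase_ssubset hSD) hD'up
        have : m (fun T => if T ∈ D then u T else 0) p
            = (∑ T ∈ D', u T * contrib p T) + α * u S := by
          rw [← ihD']
          have := step
          rw [e1, e2] at this
          linarith
        rw [this, hD']
        rw [← Finset.sum_erase_add D _ hSD]
        rw [mul_comm]
  have huniv := key Finset.univ (fun _ _ _ _ => Finset.mem_univ _)
  have : (fun T : {S : Finset A // S.Nonempty} =>
      if T ∈ (Finset.univ : Finset {S : Finset A // S.Nonempty}) then u T else 0) = u := by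
    funext T; simp
  rw [this] at huniv
  exact huniv

/-- Theorem 1: a performance measure, continuous in the capacity, satisfies
*same contribution—same impact* and *expected valuation for single-axiom-reducible
problems* iff it is the weighted Möbius performance measure. -/
theorem theorem1 (hJ : 1 ≤ Fintype.card A)
    (m : ({S : Finset A // S.Nonempty} → ℝ) → ({S : Finset A // S.Nonempty} → ℝ) → ℝ)
    (hnonneg : ∀ u p, IsCapacity u → memP p → 0 ≤ m u p)
    (hzero : ∀ p, memP p → m 0 p = 0)
    (hcont : ∀ p, memP p → ContinuousOn (fun u => m u p) {u | IsCapacity u}) :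
    (SameContribSameImpact m ∧ ExpectedValuation m) ↔
      ∀ u p, IsCapacity u → memP p →
        m u p = ∑ S : {S : Finset A // S.Nonempty}, u S * contrib p S := by
  constructor
  · rintro ⟨hSC, hEV⟩ u p hu hp
    exact forward_main m hzero hSC hEV u hu p hp
  · intro hm
    constructor
    · intro p p' hp hp' S hcon u u' hu hu' hagree
      rw [hm u p hu hp, hm u' p hu' hp, hm u p' hu hp', hm u' p' hu' hp']
      have h1 : ∀ q : {S : Finset A // S.Nonempty} → ℝ,
          (∑ T : {S : Finset A // S.Nonempty}, u' T * contrib q T)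
            - (∑ T : {S : Finset A // S.Nonempty}, u T * contrib q T)
          = (u' S - u S) * contrib q S := by
        intro q
        rw [← Finset.sum_sub_distrib]
        rw [Finset.sum_eq_single S]
        · ring
        · intro T _ hT
          rw [hagree T hT]; ring
        · intro h; exact absurd (Finset.mem_univ S) h
      rw [h1 p, h1 p', hcon]
    · intro l h0 h1 S u hu
      rw [hm u (l • pOne S) hu (memP_smul_pOne h0 h1 S)]
      have : ∀ T : {S : Finset A // S.Nonempty},
          u T * contrib (l • pOne S) T = if T = S then u T * l else 0 := by
        intro T
        rw [contrib_smul_pOne]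
        split <;> ring
      rw [Finset.sum_congr rfl (fun T _ => this T),
        Finset.sum_ite_eq' Finset.univ S (fun T => u T * l)]
      simp [mul_comm]
end

section
/- For every capacity u ∈ U and every p ∈ P, the weighted Möbius performance measure is nonnegative: ddot-m(u, p) = Σ_{∅ ≠ S ⊆ A} u_S · Σ_{T : S ⊆ T ⊆ A} (−1)^{|T ∖ S|} p_T ≥ 0. (Hence ddot-m is a well-defined performance measure U × P → [0,∞).) -/
open Finset

variable {A : Type*} [Fintype A] [DecidableEq A]

lemma alt_sum (S W : Finset A) :
    ∑ T ∈ Finset.univ.filter (fun T : Finset A => S ⊆ T ∧ T ⊆ W), (-1 : ℝ) ^ (T \ S).card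
      = if S = W then 1 else 0 := by
  by_cases h : S ⊆ W
  · have key : ∑ T ∈ Finset.univ.filter (fun T : Finset A => S ⊆ T ∧ T ⊆ W),
        (-1 : ℝ) ^ (T \ S).card = ∑ X ∈ (W \ S).powerset, (-1 : ℝ) ^ X.card :=
      Finset.sum_bij' (i := fun T _ => T \ S) (j := fun X _ => S ∪ X)
      (by
        intro T hT
        simp only [Finset.mem_filter, Finset.mem_univ, true_and] at hT
        exact Finset.mem_powerset.2 (Finset.sdiff_subset_sdiff hT.2 le_rfl))
      (by
        intro X hX
        have hX' := Finset.mem_powerset.1 hX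
        simp only [Finset.mem_filter, Finset.mem_univ, true_and]
        exact ⟨Finset.subset_union_left, Finset.union_subset h (hX'.trans Finset.sdiff_subset)⟩)
      (by
        intro T hT
        simp only [Finset.mem_filter, Finset.mem_univ, true_and] at hT
        exact Finset.union_sdiff_of_subset hT.1)
      (by
        intro X hX
        have hX' := Finset.mem_powerset.1 hX
        show (S ∪ X) \ S = X
        exact Finset.union_sdiff_cancel_left ((Finset.sdiff_disjoint.mono_left hX').symm))
      (by intro T hT; rfl)
    have h4 : ∑ X ∈ (W \ S).powerset, (-1 : ℝ) ^ X.card = if W \ S = ∅ then 1 else 0 := by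
      exact_mod_cast congrArg (fun z : ℤ => (z : ℝ)) (Finset.sum_powerset_neg_one_pow_card (x := W \ S))
    rw [key, h4]
    have : W \ S = ∅ ↔ S = W := by
      rw [Finset.sdiff_eq_empty_iff_subset]
      exact ⟨fun h' => subset_antisymm h h', fun h' => h' ▸ le_rfl⟩
    simp [this]
  · have h1 : Finset.univ.filter (fun T : Finset A => S ⊆ T ∧ T ⊆ W) = ∅ := by
      apply Finset.filter_false_of_mem
      intro T _ hT
      exact h (hT.1.trans hT.2)
    have h2 : S ≠ W := fun h' => h (h' ▸ le_rfl)
    simp [h1, h2]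

lemma contrib_eq (p : {S : Finset A // S.Nonempty} → ℝ) (π : Finset A → ℝ)
    (hπp : ∀ S : {S : Finset A // S.Nonempty},
      p S = ∑ W ∈ Finset.univ.filter (fun W : Finset A => S.1 ⊆ W), π W)
    (S : {S : Finset A // S.Nonempty}) : contrib p S = π S.1 := by
  have hS := S.2
  have step1 : contrib p S = ∑ T : Finset A,
      if S.1 ⊆ T then ∑ W : Finset A, (if T ⊆ W then (-1 : ℝ) ^ (T \ S.1).card * π W else 0)
      else 0 := by
    unfold contrib
    rw [Finset.sum_filter]
    have e1 : ∀ T : {T : Finset A // T.Nonempty},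
        (if S.1 ⊆ T.1 then (-1 : ℝ) ^ (T.1 \ S.1).card * p T else 0)
        = (fun T : Finset A => if S.1 ⊆ T then
            ∑ W : Finset A, (if T ⊆ W then (-1 : ℝ) ^ (T \ S.1).card * π W else 0) else 0)
            T.1 := by
      intro T
      by_cases hST : S.1 ⊆ T.1
      · simp only [hST, if_true]
        rw [hπp T, Finset.mul_sum, Finset.sum_filter]
      · simp [hST]
    have e2 := Finset.sum_subtype (p := fun T : Finset A => T.Nonempty) (F := inferInstance)
      (Finset.univ.filter (fun T : Finset A => T.Nonempty)) (by simp)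
      (fun T : Finset A => if S.1 ⊆ T then
        ∑ W : Finset A, (if T ⊆ W then (-1 : ℝ) ^ (T \ S.1).card * π W else 0) else 0)
    rw [Finset.sum_congr rfl fun T _ => e1 T, ← e2]
    symm
    refine (Finset.sum_subset (Finset.filter_subset _ _) ?_).symm
    intro T _ hT
    simp only [Finset.mem_filter, Finset.mem_univ, true_and] at hT
    have hn : ¬ S.1 ⊆ T := fun hsub => hT (hS.mono hsub)
    simp [hn]
  rw [step1]
  have step2 : ∀ T : Finset A,
      (if S.1 ⊆ T then ∑ W : Finset A, (if T ⊆ W then (-1 : ℝ) ^ (T \ S.1).card * π W else 0)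
        else 0)
      = ∑ W : Finset A, (if S.1 ⊆ T ∧ T ⊆ W then (-1 : ℝ) ^ (T \ S.1).card * π W else 0) := by
    intro T
    by_cases hST : S.1 ⊆ T <;> simp [hST]
  rw [Finset.sum_congr rfl fun T _ => step2 T, Finset.sum_comm]
  have step3 : ∀ W : Finset A,
      ∑ T : Finset A, (if S.1 ⊆ T ∧ T ⊆ W then (-1 : ℝ) ^ (T \ S.1).card * π W else 0)
      = (if S.1 = W then 1 else 0) * π W := by
    intro W
    rw [← Finset.sum_filter, ← alt_sum S.1 W, Finset.sum_mul]
  rw [Finset.sum_congr rfl fun W _ => step3 W]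
  simp [Finset.sum_ite_eq]

/-- The weighted Möbius performance measure is nonnegative on `U × P`:
`ddot-m(u,p) = Σ_{∅ ≠ S ⊆ A} u_S α^p_S ≥ 0`. -/
theorem mobius_measure_nonneg (hJ : 1 ≤ Fintype.card A)
    (u p : {S : Finset A // S.Nonempty} → ℝ) (hu : IsCapacity u) (hp : memP p) :
    0 ≤ ∑ S : {S : Finset A // S.Nonempty}, u S * contrib p S := by
  obtain ⟨π, hπ0, _, hπp⟩ := hp
  apply Finset.sum_nonneg
  intro S _
  rw [contrib_eq p π hπp S]
  exact mul_nonneg (hu.1 S) (hπ0 S.1)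
end
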